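/- arXiv:1304.5377 — 2 statements merged into one kernel-verified Lean document; each statement's English description precedes it below -/
import Mathlib

section
/- Let X be a complex Banach space and f : ℂ → X a holomorphic (entire) function. For all nonnegative reals R₁, R₂, R with R₁ + R₂ ≤ R, we have ∫_𝕋 ∫_𝕋 ‖f(R₁ z₁ + R₂ z₂)‖ dz₁ dz₂ ≤ ∫_𝕋 ‖f(R z)‖ dz, where 𝕋 is the unit circle with normalized Lebesgue (Haar) measure. -/
open MeasureTheory Filter Finset
open scoped BigOperators ENNReal NNReal Topology
set_option maxHeartbeats 1000000

noncomputable instance : MeasurableSpace Circle := borel Circle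
instance : BorelSpace Circle := ⟨rfl⟩

/-- Normalized Haar (probability) measure on the circle group `𝕋`. -/
noncomputable def circleHaar : Measure Circle :=
  ((Measure.haar : Measure Circle) Set.univ)⁻¹ • Measure.haar

/-- Normalized Haar measure on the polytorus `𝕋^N`. -/
noncomputable def torusHaar (N : ℕ) : Measure (Fin N → Circle) :=
  Measure.pi fun _ => circleHaar

instance : Measure.IsMulLeftInvariant circleHaar := by unfold circleHaar; infer_instance

instance : IsProbabilityMeasure circleHaar := by
  constructor
  rw [circleHaar]
  simp only [Measure.smul_apply, smul_eq_mul]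
  exact ENNReal.inv_mul_cancel (NeZero.ne' _).symm (measure_ne_top _ _)

lemma continuous_circle_coe : Continuous (fun z : Circle => (z : ℂ)) :=
  continuous_subtype_val

@[simp] lemma circle_norm_coe (z : Circle) : ‖(z : ℂ)‖ = 1 := by
  exact Circle.norm_coe z

/-- Continuous functions on a compact space are integrable w.r.t. a finite measure. -/
lemma cont_integrable {α E : Type*} [TopologicalSpace α] [MeasurableSpace α]
    [BorelSpace α] [CompactSpace α] [TopologicalSpace.PseudoMetrizableSpace α]
    [SecondCountableTopology α]
    [NormedAddCommGroup E] (μ : Measure α) [IsFiniteMeasure μ] {g : α → E}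
    (hg : Continuous g) : Integrable g μ := by
  have hc : IsCompact (Set.range g) := isCompact_range hg
  obtain ⟨D, hD⟩ := hc.isBounded.exists_norm_le
  exact Integrable.mono' (integrable_const D) hg.stronglyMeasurable.aestronglyMeasurable
    (ae_of_all _ fun x => hD _ (Set.mem_range_self x))

section Mono

variable {X : Type*} [NormedAddCommGroup X] [NormedSpace ℂ X] [CompleteSpace X]

/-- Rotation invariance: the circle average of `‖f (ζ z)‖` depends only on `‖ζ‖`. -/
lemma rot_integral (f : ℂ → X) (hf : Continuous f) {ζ : ℂ} {R : ℝ} (hR : 0 < R)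
    (hζ : ‖ζ‖ = R) :
    ∫ z : Circle, ‖f (ζ * z)‖ ∂circleHaar = ∫ z : Circle, ‖f ((R : ℂ) * z)‖ ∂circleHaar := by
  have hu : (ζ / R) ∈ Metric.sphere (0:ℂ) 1 := by
    simp only [Metric.mem_sphere, dist_zero_right, norm_div, hζ, Complex.norm_real,
      Real.norm_eq_abs, abs_of_pos hR]
    field_simp
  set u : Circle := ⟨ζ / R, hu⟩
  have key : ∀ z : Circle, ζ * (z : ℂ) = (R : ℂ) * ((u * z : Circle) : ℂ) := by
    intro z
    have hRne : (R : ℂ) ≠ 0 := by exact_mod_cast hR.ne'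
    push_cast [Circle.coe_mul]
    show ζ * (z:ℂ) = (R:ℂ) * (ζ / (R:ℂ) * (z:ℂ))
    field_simp
  calc ∫ z : Circle, ‖f (ζ * z)‖ ∂circleHaar
      = ∫ z : Circle, ‖f ((R : ℂ) * ((u * z : Circle) : ℂ))‖ ∂circleHaar := by
        congr 1; ext z; rw [key]
    _ = ∫ z : Circle, ‖f ((R : ℂ) * z)‖ ∂circleHaar :=
        integral_mul_left_eq_self (fun w : Circle => ‖f ((R : ℂ) * w)‖) u

/-- Key monotonicity lemma: circle averages of `‖f‖` around 0 are monotone in the radius. -/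
lemma mono_lemma (f : ℂ → X) (hf : Differentiable ℂ f) (c : ℂ) (R : ℝ) (hc : ‖c‖ ≤ R) :
    ∫ z : Circle, ‖f (c * z)‖ ∂circleHaar ≤ ∫ z : Circle, ‖f ((R : ℂ) * z)‖ ∂circleHaar := by
  have hfc : Continuous f := hf.continuous
  rcases eq_or_lt_of_le ((norm_nonneg c).trans hc) with hR0 | hR0
  · -- R = 0, hence c = 0
    have hc0 : c = 0 := by
      rw [← norm_le_zero_iff]; rw [← hR0] at hc; exact hc
    simp [hc0, ← hR0]
  -- main case R > 0
  have hdc : Continuous (deriv f) :=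
    (hf.contDiff (n := 2)).continuous_deriv (by norm_num)
  apply le_of_forall_pos_le_add
  intro ε hε
  set μ := circleHaar
  set g : Circle → X := fun z => f (c * z) with hg_def
  have hgc : Continuous g := hfc.comp (continuous_const.mul continuous_circle_coe)
  have hgi : Integrable g μ := cont_integrable μ hgc
  obtain ⟨s, hs, hsmem⟩ := (memLp_one_iff_integrable.2 hgi).exists_simpleFunc_eLpNorm_sub_lt
    ENNReal.one_ne_top (ε := ENNReal.ofReal (ε/4)) (by positivity)
  have hsi : Integrable s μ := memLp_one_iff_integrable.1 hsmem
  have hdi : Integrable (fun z => g z - s z) μ := hgi.sub hsi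
  have hI : ∫ z, ‖g z - s z‖ ∂μ ≤ ε/4 := by
    have h1 : ENNReal.ofReal (∫ z, ‖g z - s z‖ ∂μ) < ENNReal.ofReal (ε/4) := by
      rw [ofReal_integral_norm_eq_lintegral_enorm hdi, ← eLpNorm_one_eq_lintegral_enorm]
      exact hs
    have := (ENNReal.ofReal_lt_ofReal_iff (by positivity)).1 h1
    linarith
  -- norming functionals
  choose φ hφ1 hφ2 using fun x : X => exists_dual_vector'' ℂ x
  set T : SimpleFunc Circle (X →L[ℂ] ℂ) := s.map φ with hT_def
  have hT1 : ∀ z, ‖T z‖ ≤ 1 := fun z => by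
    rw [hT_def, SimpleFunc.map_apply]; exact hφ1 _
  have hT2 : ∀ z, (T z) (s z) = (‖s z‖ : ℂ) := fun z => by
    rw [hT_def, SimpleFunc.map_apply]; exact hφ2 _
  -- the holomorphic family
  set F : ℂ → Circle → ℂ := fun ζ z => T z (f (ζ * z)) with hF_def
  set F' : ℂ → Circle → ℂ := fun ζ z => T z ((z : ℂ) • deriv f (ζ * z)) with hF'_def
  have hTsm : StronglyMeasurable (fun z => T z) := T.stronglyMeasurable
  have meas_aux : ∀ (G : ℂ → X), Continuous G → ∀ ζ : ℂ,
      AEStronglyMeasurable (fun z : Circle => T z (G (ζ * z))) μ := by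
    intro G hG ζ
    have h1 : StronglyMeasurable (fun z : Circle => (T z, G (ζ * z))) :=
      hTsm.prodMk (hG.comp (continuous_const.mul continuous_circle_coe)).stronglyMeasurable
    exact ((isBoundedBilinearMap_apply.continuous).comp_stronglyMeasurable h1).aestronglyMeasurable
  have hFmeas : ∀ ζ, AEStronglyMeasurable (F ζ) μ := fun ζ => meas_aux f hfc ζ
  have hF'meas : ∀ ζ, AEStronglyMeasurable (F' ζ) μ := by
    intro ζ
    have h1 : StronglyMeasurable (fun z : Circle => (T z, (z:ℂ) • deriv f (ζ * z))) :=
      hTsm.prodMk (Continuous.stronglyMeasurable (by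
        exact continuous_circle_coe.smul (hdc.comp (continuous_const.mul continuous_circle_coe))))
    exact ((isBoundedBilinearMap_apply.continuous).comp_stronglyMeasurable h1).aestronglyMeasurable
  have norm_F_le : ∀ ζ (z : Circle), ‖F ζ z‖ ≤ ‖f (ζ * z)‖ := by
    intro ζ z
    calc ‖F ζ z‖ ≤ ‖T z‖ * ‖f (ζ * z)‖ := (T z).le_opNorm _
      _ ≤ 1 * ‖f (ζ * z)‖ := by
          have := norm_nonneg (f (ζ * (z:ℂ)))
          nlinarith [hT1 z]
      _ = ‖f (ζ * z)‖ := one_mul _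
  have hFint : ∀ ζ, Integrable (F ζ) μ := by
    intro ζ
    have hcont : Continuous (fun z : Circle => ‖f (ζ * z)‖) :=
      (hfc.comp (continuous_const.mul continuous_circle_coe)).norm
    refine (cont_integrable μ hcont).mono' (hFmeas ζ) (ae_of_all _ fun z => ?_)
    simpa using norm_F_le ζ z
  -- h is entire
  set h : ℂ → ℂ := fun ζ => ∫ z, F ζ z ∂μ with hh_def
  have hdiff : Differentiable ℂ h := by
    intro ζ₀
    obtain ⟨w, -, hC⟩ := (isCompact_closedBall (0:ℂ) (‖ζ₀‖+1)).exists_isMaxOn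
      ⟨0, by simp; positivity⟩ hdc.norm.continuousOn
    have key := hasDerivAt_integral_of_dominated_loc_of_deriv_le (F := F) (F' := F')
      (x₀ := ζ₀) (bound := fun _ => ‖deriv f w‖) (s := Metric.ball ζ₀ 1) (Metric.ball_mem_nhds ζ₀ zero_lt_one)
      (Eventually.of_forall fun ζ => hFmeas ζ) (hFint ζ₀) (hF'meas ζ₀)
      (ae_of_all _ ?_) (integrable_const _) (ae_of_all _ ?_)
    · exact key.2.differentiableAt
    · -- bound
      intro z ζ hζ
      have hmem : ζ * (z:ℂ) ∈ Metric.closedBall (0:ℂ) (‖ζ₀‖+1) := by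
        rw [Metric.mem_closedBall, dist_zero_right, norm_mul, circle_norm_coe, mul_one]
        have : ‖ζ - ζ₀‖ < 1 := by
          rw [Metric.mem_ball, dist_eq_norm] at hζ; exact hζ
        calc ‖ζ‖ = ‖ζ₀ + (ζ - ζ₀)‖ := by ring_nf
          _ ≤ ‖ζ₀‖ + ‖ζ - ζ₀‖ := norm_add_le _ _
          _ ≤ ‖ζ₀‖ + 1 := by linarith
      calc ‖F' ζ z‖ ≤ ‖T z‖ * ‖(z:ℂ) • deriv f (ζ * z)‖ := (T z).le_opNorm _
        _ ≤ 1 * (‖(z:ℂ)‖ * ‖deriv f (ζ * z)‖) := by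
            rw [norm_smul]
            have h0 : (0:ℝ) ≤ ‖(z:ℂ)‖ * ‖deriv f (ζ * (z:ℂ))‖ := by positivity
            nlinarith [hT1 z]
        _ = ‖deriv f (ζ * z)‖ := by rw [circle_norm_coe]; ring
        _ ≤ ‖deriv f w‖ := isMaxOn_iff.1 hC _ hmem
    · -- differentiability pointwise
      intro z ζ hζ
      have inner : HasDerivAt (fun ζ : ℂ => f (ζ * z)) ((z:ℂ) • deriv f (ζ * z)) ζ := by
        have h1 : HasDerivAt (fun ζ : ℂ => ζ * (z:ℂ)) (z:ℂ) ζ := hasDerivAt_mul_const _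
        exact (hf (ζ * z)).hasDerivAt.scomp ζ h1
      exact (T z).hasFDerivAt.comp_hasDerivAt ζ inner
  -- bound on the sphere of radius R
  have hbd : ∀ ζ : ℂ, ‖ζ‖ = R → ‖h ζ‖ ≤ ∫ z : Circle, ‖f ((R:ℂ) * z)‖ ∂μ := by
    intro ζ hζ
    have hcont : Continuous (fun z : Circle => ‖f (ζ * z)‖) :=
      (hfc.comp (continuous_const.mul continuous_circle_coe)).norm
    calc ‖h ζ‖ ≤ ∫ z, ‖F ζ z‖ ∂μ := norm_integral_le_integral_norm _
      _ ≤ ∫ z : Circle, ‖f (ζ * z)‖ ∂μ :=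
          integral_mono (hFint ζ).norm (cont_integrable μ hcont) (norm_F_le ζ)
      _ = ∫ z : Circle, ‖f ((R:ℂ) * z)‖ ∂μ := rot_integral f hfc hR0 hζ
  -- maximum modulus
  have hmax : ‖h c‖ ≤ ∫ z : Circle, ‖f ((R:ℂ) * z)‖ ∂μ := by
    refine Complex.norm_le_of_forall_mem_frontier_norm_le (U := Metric.ball (0:ℂ) R)
      Metric.isBounded_ball hdiff.diffContOnCl ?_ ?_
    · intro ζ hζ
      rw [frontier_ball _ hR0.ne'] at hζ
      exact hbd ζ (by simpa [dist_zero_right] using hζ)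
    · rw [closure_ball _ hR0.ne']
      simpa [dist_zero_right] using hc
  -- lower bound on Re (h c)
  have hre_eq : (h c).re = ∫ z, (F c z).re ∂μ := by
    rw [hh_def]
    exact (Complex.reCLM.integral_comp_comm (hFint c)).symm
  have hpt : ∀ z, ‖g z‖ - 2 * ‖g z - s z‖ ≤ (F c z).re := by
    intro z
    have e1 : F c z = (‖s z‖ : ℂ) + T z (g z - s z) := by
      rw [hF_def]
      show T z (g z) = (‖s z‖ : ℂ) + T z (g z - s z)
      rw [map_sub, hT2]; ring
    have e2 : (F c z).re = ‖s z‖ + (T z (g z - s z)).re := by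
      rw [e1]; simp
    have h2 : |(T z (g z - s z)).re| ≤ ‖g z - s z‖ := by
      refine (Complex.abs_re_le_norm _).trans ?_
      calc ‖T z (g z - s z)‖ ≤ ‖T z‖ * ‖g z - s z‖ := (T z).le_opNorm _
        _ ≤ 1 * ‖g z - s z‖ := by nlinarith [hT1 z, norm_nonneg (g z - s z)]
        _ = ‖g z - s z‖ := one_mul _
    have h3 : ‖g z‖ - ‖g z - s z‖ ≤ ‖s z‖ := by
      have := norm_sub_norm_le (g z) (s z)
      have h4 : ‖g z‖ - ‖s z‖ ≤ ‖g z - s z‖ := by linarith [this]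
      linarith
    have h5 := neg_abs_le ((T z (g z - s z)).re)
    rw [e2]
    linarith [abs_le.1 h2]
  have hint1 : Integrable (fun z => ‖g z‖ - 2 * ‖g z - s z‖) μ :=
    hgi.norm.sub (hdi.norm.const_mul 2)
  have hint2 : Integrable (fun z => (F c z).re) μ := (hFint c).re
  have hre_ge : ∫ z, ‖g z‖ ∂μ - 2 * (ε/4) ≤ (h c).re := by
    rw [hre_eq]
    have step : ∫ z, (‖g z‖ - 2 * ‖g z - s z‖) ∂μ ≤ ∫ z, (F c z).re ∂μ :=
      integral_mono hint1 hint2 hpt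
    rw [integral_sub hgi.norm (hdi.norm.const_mul 2), integral_const_mul] at step
    linarith
  -- combine
  have hrele : (h c).re ≤ ‖h c‖ := by
    exact Complex.re_le_norm _
  have : ∫ z, ‖g z‖ ∂μ ≤ (∫ z : Circle, ‖f ((R:ℂ) * z)‖ ∂μ) + ε/2 := by linarith
  calc ∫ z : Circle, ‖f (c * z)‖ ∂μ = ∫ z, ‖g z‖ ∂μ := rfl
    _ ≤ (∫ z : Circle, ‖f ((R:ℂ) * z)‖ ∂μ) + ε/2 := this
    _ ≤ (∫ z : Circle, ‖f ((R:ℂ) * z)‖ ∂μ) + ε := by linarith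

end Mono

/-- For an entire function `f : ℂ → X` with values in a complex Banach space and
`0 ≤ R₁`, `0 ≤ R₂`, `R₁ + R₂ ≤ R`, one has
`∫_𝕋 ∫_𝕋 ‖f(R₁z₁ + R₂z₂)‖ dz₁ dz₂ ≤ ∫_𝕋 ‖f(Rz)‖ dz`. -/
theorem stmt0 {X : Type*} [NormedAddCommGroup X] [NormedSpace ℂ X] [CompleteSpace X]
    (f : ℂ → X) (hf : Differentiable ℂ f)
    (R₁ R₂ R : ℝ) (h₁ : 0 ≤ R₁) (h₂ : 0 ≤ R₂) (hR : R₁ + R₂ ≤ R) :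
    (∫ z₁ : Circle, ∫ z₂ : Circle,
        ‖f ((R₁ : ℂ) * (z₁ : ℂ) + (R₂ : ℂ) * (z₂ : ℂ))‖ ∂circleHaar ∂circleHaar)
      ≤ ∫ z : Circle, ‖f ((R : ℂ) * (z : ℂ))‖ ∂circleHaar := by
  set μ := circleHaar
  have hfc : Continuous f := hf.continuous
  -- Step 1: rotate the inner variable
  have step1 : ∀ z₁ : Circle, ∫ z₂ : Circle, ‖f ((R₁ : ℂ) * z₁ + (R₂ : ℂ) * z₂)‖ ∂μ
      = ∫ z₂ : Circle, ‖f (((R₁ : ℂ) + (R₂ : ℂ) * z₂) * z₁)‖ ∂μ := by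
    intro z₁
    rw [← integral_mul_left_eq_self
      (fun z₂ : Circle => ‖f ((R₁ : ℂ) * z₁ + (R₂ : ℂ) * z₂)‖) z₁]
    congr 1; ext z₂
    rw [Circle.coe_mul]; ring_nf
  simp_rw [step1]
  -- Step 2: Fubini
  have hcont2 : Continuous (fun p : Circle × Circle =>
      ‖f (((R₁ : ℂ) + (R₂ : ℂ) * p.2) * p.1)‖) := by
    apply Continuous.norm
    exact hfc.comp (((continuous_const.add (continuous_const.mul
      (continuous_circle_coe.comp continuous_snd)))).mul
      (continuous_circle_coe.comp continuous_fst))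
  have hint : Integrable (Function.uncurry fun z₁ z₂ : Circle =>
      ‖f (((R₁ : ℂ) + (R₂ : ℂ) * z₂) * z₁)‖) (μ.prod μ) := by
    exact cont_integrable (μ.prod μ) hcont2
  rw [integral_integral_swap hint]
  -- Step 3: pointwise monotonicity
  have hmono : ∀ z₂ : Circle, ∫ z₁ : Circle, ‖f (((R₁ : ℂ) + (R₂ : ℂ) * z₂) * z₁)‖ ∂μ
      ≤ ∫ z : Circle, ‖f ((R : ℂ) * z)‖ ∂μ := by
    intro z₂
    apply mono_lemma f hf
    calc ‖(R₁ : ℂ) + (R₂ : ℂ) * z₂‖ ≤ ‖(R₁ : ℂ)‖ + ‖(R₂ : ℂ) * z₂‖ := norm_add_le _ _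
      _ = R₁ + R₂ := by
          rw [norm_mul, circle_norm_coe, mul_one, Complex.norm_real, Complex.norm_real,
            Real.norm_eq_abs, Real.norm_eq_abs, abs_of_nonneg h₁, abs_of_nonneg h₂]
      _ ≤ R := hR
  have hmarg : Integrable (fun z₂ : Circle =>
      ∫ z₁ : Circle, ‖f (((R₁ : ℂ) + (R₂ : ℂ) * z₂) * z₁)‖ ∂μ) μ :=
    by simpa [Function.uncurry] using hint.integral_prod_right
  calc ∫ z₂ : Circle, ∫ z₁ : Circle, ‖f (((R₁ : ℂ) + (R₂ : ℂ) * z₂) * z₁)‖ ∂μ ∂μ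
      ≤ ∫ _z₂ : Circle, (∫ z : Circle, ‖f ((R : ℂ) * z)‖ ∂μ) ∂μ :=
        integral_mono hmarg (integrable_const _) hmono
    _ = ∫ z : Circle, ‖f ((R : ℂ) * z)‖ ∂μ := by
        rw [integral_const, probReal_univ, one_smul]
end

section
/- Let X be a Banach space with cotype q (2 ≤ q < ∞), with cotype constant C_q(X), and let K be the constant in Kahane's inequality comparing the L¹ and L² norms of Steinhaus (circle-valued) random sums. Then for every m-linear map T : (ℂ^N)^m → X with coefficients a_{i₁,…,i_m} (i.e., T(z⁽¹⁾,…,z⁽ᵐ⁾) = Σ a_{i₁,…,i_m} z⁽¹⁾_{i₁} ⋯ z⁽ᵐ⁾_{i_m}), one has (Σ_{i₁,…,i_m=1}^N ‖a_{i₁,…,i_m}‖^q)^{1/q} ≤ (C_q(X) K)^m ∫_{𝕋^N} ⋯ ∫_{𝕋^N} ‖T(z⁽¹⁾,…,z⁽ᵐ⁾)‖ dz⁽¹⁾ ⋯ dz⁽ᵐ⁾. -/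
open MeasureTheory Filter Finset
open scoped BigOperators ENNReal NNReal Topology

instance inst_s3 : IsProbabilityMeasure circleHaar := by
  constructor
  rw [circleHaar, Measure.smul_apply, smul_eq_mul]
  exact ENNReal.inv_mul_cancel
    ((isOpen_univ.measure_pos Measure.haar Set.univ_nonempty).ne')
    (isCompact_univ.measure_lt_top).ne

instance (N : ℕ) : IsProbabilityMeasure (torusHaar N) := by
  rw [torusHaar]; infer_instance

/-- A continuous function on a compact space is integrable w.r.t. a finite measure. -/
lemma Continuous.integrable_cpt {α : Type*} [TopologicalSpace α] [CompactSpace α]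
    [MeasurableSpace α] [OpensMeasurableSpace α] {E : Type*} [NormedAddCommGroup E]
    {μ : Measure α} [IsFiniteMeasure μ] {f : α → E} (hf : Continuous f) : Integrable f μ :=
  hf.integrable_of_hasCompactSupport (HasCompactSupport.of_compactSpace f)

set_option maxHeartbeats 1000000 in
/-- Minkowski's integral inequality for finite sums, via `PiLp`. -/
theorem minkowski_sum {α : Type*} [MeasurableSpace α] {μ : Measure α}
    {ι : Type*} [Fintype ι] (q : ℝ) (hq : 1 ≤ q) (f : α → ι → ℝ)
    (hf : Integrable f μ) (hnn : ∀ x i, 0 ≤ f x i) :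
    (∑ i, (∫ x, f x i ∂μ) ^ q) ^ (1/q) ≤ ∫ x, (∑ i, (f x i) ^ q) ^ (1/q) ∂μ := by
  have hq0 : 0 < q := lt_of_lt_of_le one_pos hq
  set p : ℝ≥0∞ := ENNReal.ofReal q with hp
  haveI : Fact (1 ≤ p) := ⟨by simpa [hp] using ENNReal.one_le_ofReal.mpr hq⟩
  have hpt : p.toReal = q := ENNReal.toReal_ofReal hq0.le
  have hpt0 : 0 < p.toReal := by rw [hpt]; exact hq0
  let e := PiLp.continuousLinearEquiv p ℝ (fun _ : ι => ℝ)
  let F : α → PiLp p (fun _ : ι => ℝ) := fun x => e.symm (f x)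
  have hF : Integrable F μ := by
    simpa [F] using (e.symm.toContinuousLinearMap).integrable_comp hf
  have hcomp : ∀ i, (∫ x, F x ∂μ) i = ∫ x, f x i ∂μ := by
    intro i
    have := (((ContinuousLinearMap.proj i : (ι → ℝ) →L[ℝ] ℝ).comp
      (e : PiLp p (fun _ : ι => ℝ) →L[ℝ] (ι → ℝ))).integral_comp_comm hF)
    exact this.symm
  have h1 : (∑ i, (∫ x, f x i ∂μ) ^ q) ^ (1/q) = ‖∫ x, F x ∂μ‖ := by
    rw [PiLp.norm_eq_sum hpt0, hpt]
    congr 1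
    refine Finset.sum_congr rfl fun i _ => ?_
    rw [hcomp i, Real.norm_eq_abs, abs_of_nonneg (integral_nonneg (fun x => hnn x i))]
  rw [h1]
  refine (norm_integral_le_integral_norm F).trans_eq ?_
  refine integral_congr_ae (Filter.Eventually.of_forall fun x => ?_)
  show ‖F x‖ = _
  rw [PiLp.norm_eq_sum hpt0, hpt]
  congr 1
  refine Finset.sum_congr rfl fun i _ => ?_
  have : F x i = f x i := rfl
  rw [Real.norm_eq_abs, this, abs_of_nonneg (hnn x i)]

lemma cont_aux {X : Type*} [NormedAddCommGroup X] [NormedSpace ℂ X] {m N : ℕ}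
    (a : (Fin m → Fin N) → X) :
    Continuous fun zs : Fin m → Fin N → Circle =>
      ∑ i : Fin m → Fin N, (∏ k : Fin m, (zs k (i k) : ℂ)) • a i := by
  refine continuous_finset_sum _ fun i _ => Continuous.smul ?_ continuous_const
  refine continuous_finset_prod _ fun k _ => ?_
  exact (continuous_subtype_val : Continuous ((↑) : Circle → ℂ)).comp
    ((continuous_apply (i k)).comp (continuous_apply k))

lemma cont_aux1 {X : Type*} [NormedAddCommGroup X] [NormedSpace ℂ X] {N : ℕ}
    (x : Fin N → X) :
    Continuous fun z : Fin N → Circle => ∑ k : Fin N, (z k : ℂ) • x k := by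
  refine continuous_finset_sum _ fun k _ => Continuous.smul ?_ continuous_const
  exact (continuous_subtype_val : Continuous ((↑) : Circle → ℂ)).comp (continuous_apply k)

/-- If `X` has cotype `q` with constant `Cq` (w.r.t. Steinhaus variables) and `K` is
the Kahane `L¹`–`L²` constant for Steinhaus sums, then for every `m`-linear map
`T : (ℂ^N)^m → X` with coefficients `a`,
`(Σ ‖a_{i₁,…,i_m}‖^q)^{1/q} ≤ (Cq K)^m ∫_{𝕋^N}⋯∫_{𝕋^N} ‖T(z⁽¹⁾,…,z⁽ᵐ⁾)‖ dz⁽¹⁾⋯dz⁽ᵐ⁾`. -/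
theorem stmt3 {X : Type*} [NormedAddCommGroup X] [NormedSpace ℂ X]
    (q : ℝ) (hq : 2 ≤ q) (Cq K : ℝ)
    (hcot : ∀ (N : ℕ) (x : Fin N → X),
      (∑ k, ‖x k‖ ^ q) ^ (1 / q)
        ≤ Cq * (∫ z : Fin N → Circle,
            ‖∑ k, (z k : ℂ) • x k‖ ^ (2 : ℝ) ∂torusHaar N) ^ (1 / (2 : ℝ)))
    (hK : ∀ (N : ℕ) (x : Fin N → X),
      (∫ z : Fin N → Circle, ‖∑ k, (z k : ℂ) • x k‖ ^ (2 : ℝ) ∂torusHaar N) ^ (1 / (2 : ℝ))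
        ≤ K * ∫ z : Fin N → Circle, ‖∑ k, (z k : ℂ) • x k‖ ∂torusHaar N)
    (N m : ℕ) (hm : 1 ≤ m) (a : (Fin m → Fin N) → X) :
    (∑ i : Fin m → Fin N, ‖a i‖ ^ q) ^ (1 / q)
      ≤ (Cq * K) ^ m *
          ∫ zs : Fin m → Fin N → Circle,
            ‖∑ i : Fin m → Fin N, (∏ k : Fin m, (zs k (i k) : ℂ)) • a i‖
              ∂(Measure.pi fun _ => torusHaar N) := by
  have hq0 : (0 : ℝ) < q := lt_of_lt_of_le two_pos hq
  have hq0' : q ≠ 0 := ne_of_gt hq0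
  by_cases hX : ∀ x : X, x = 0
  · have h0 : ∀ i, a i = 0 := fun i => hX _
    simp only [h0, norm_zero, Real.zero_rpow hq0', Finset.sum_const_zero,
      Real.zero_rpow (one_div_ne_zero hq0'), smul_zero, norm_zero, integral_zero, mul_zero]
    exact le_refl 0
  push_neg at hX
  obtain ⟨x₀, hx₀⟩ := hX
  have hx₀n : (0:ℝ) < ‖x₀‖ := norm_pos_iff.mpr hx₀
  -- positivity of Cq
  have hCq : 0 < Cq := by
    have h := hcot 1 (fun _ => x₀)
    rw [Fin.sum_univ_one, ← Real.rpow_mul (norm_nonneg x₀), mul_one_div_cancel hq0',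
      Real.rpow_one] at h
    have ht : 0 ≤ (∫ z : Fin 1 → Circle,
        ‖∑ k, (z k : ℂ) • (fun _ => x₀) k‖ ^ (2 : ℝ) ∂torusHaar 1) ^ (1 / (2 : ℝ)) :=
      Real.rpow_nonneg (integral_nonneg fun z => Real.rpow_nonneg (norm_nonneg _) _) _
    nlinarith
  -- positivity of K
  have hK0 : 0 < K := by
    have h := hK 1 (fun _ => x₀)
    have e1 : ∀ z : Fin 1 → Circle, ‖∑ k : Fin 1, (z k : ℂ) • (fun _ => x₀) k‖ = ‖x₀‖ := by
      intro z
      rw [Fin.sum_univ_one, norm_smul]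
      simp [Circle.norm_coe]
    simp only [e1] at h
    rw [integral_const, integral_const] at h
    simp only [probReal_univ, one_smul, smul_eq_mul, one_mul] at h
    rw [← Real.rpow_mul (norm_nonneg x₀), mul_one_div_cancel (two_ne_zero), Real.rpow_one] at h
    nlinarith
  set D : ℝ := Cq * K with hD
  have hD0 : 0 < D := mul_pos hCq hK0
  -- the one-variable inequality with combined constant
  have hkey : ∀ (N' : ℕ) (x : Fin N' → X),
      (∑ k, ‖x k‖ ^ q) ^ (1 / q)
        ≤ D * ∫ z : Fin N' → Circle, ‖∑ k, (z k : ℂ) • x k‖ ∂torusHaar N' := by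
    intro N' x
    refine (hcot N' x).trans ?_
    rw [hD, mul_assoc]
    exact mul_le_mul_of_nonneg_left (hK N' x) hCq.le
  -- main induction
  have main : ∀ (M : ℕ) (b : (Fin M → Fin N) → X),
      (∑ i : Fin M → Fin N, ‖b i‖ ^ q) ^ (1 / q)
        ≤ D ^ M *
          ∫ zs : Fin M → Fin N → Circle,
            ‖∑ i : Fin M → Fin N, (∏ k : Fin M, (zs k (i k) : ℂ)) • b i‖
              ∂(Measure.pi fun _ => torusHaar N) := by
    intro M
    induction M with
    | zero =>
      intro b
      have hu : ∀ i : Fin 0 → Fin N, i = Fin.elim0 := fun i => Subsingleton.elim _ _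
      rw [Fintype.sum_unique fun i : Fin 0 → Fin N => ‖b i‖ ^ q]
      have : ∀ zs : Fin 0 → Fin N → Circle,
          ‖∑ i : Fin 0 → Fin N, (∏ k : Fin 0, (zs k (i k) : ℂ)) • b i‖ = ‖b default‖ := by
        intro zs
        rw [Fintype.sum_unique fun i : Fin 0 → Fin N => (∏ k : Fin 0, (zs k (i k) : ℂ)) • b i]
        simp
      rw [integral_congr_ae (Filter.Eventually.of_forall this), integral_const]
      simp only [probReal_univ, one_smul, pow_zero, one_mul]
      rw [← Real.rpow_mul (norm_nonneg _), mul_one_div_cancel hq0', Real.rpow_one]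
    | succ m ih =>
      intro b
      have h1q : (1:ℝ) ≤ q := one_le_two.trans hq
      set β := (Fin N → Circle) with hβ
      set f : β → (Fin m → Fin N) → ℝ :=
        fun z i' => ‖∑ j : Fin N, (z j : ℂ) • b (Fin.cons j i')‖ with hfdef
      have hfnn : ∀ z i', 0 ≤ f z i' := fun z i' => norm_nonneg _
      have hfcont : Continuous f := continuous_pi fun i' =>
        (cont_aux1 (fun j => b (Fin.cons j i'))).norm
      have hfint : Integrable f (torusHaar N) := hfcont.integrable_cpt
      set G0 : (Fin (m+1) → β) → ℝ :=
        fun zs => ‖∑ i : Fin (m+1) → Fin N, (∏ k : Fin (m+1), (zs k (i k) : ℂ)) • b i‖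
        with hG0def
      have hG0cont : Continuous G0 := (cont_aux b).norm
      have hconscont :
          Continuous (fun p : β × (Fin m → β) => (Fin.cons p.1 p.2 : Fin (m+1) → β)) := by
        refine continuous_pi fun k => ?_
        induction k using Fin.cases with
        | zero =>
          simpa only [Fin.cons_zero] using
            (continuous_fst : Continuous fun p : β × (Fin m → β) => p.1)
        | succ j =>
          simpa only [Fin.cons_succ, Function.comp_def] using
            ((continuous_apply j).comp
              (continuous_snd : Continuous fun p : β × (Fin m → β) => p.2))
      have hG : Integrable (fun p : β × (Fin m → β) => G0 (Fin.cons p.1 p.2))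
          ((torusHaar N).prod (Measure.pi fun _ : Fin m => torusHaar N)) :=
        (hG0cont.comp hconscont).integrable_cpt
      set φ : β → ℝ :=
        fun z => ∫ zs' : Fin m → β, G0 (Fin.cons z zs') ∂(Measure.pi fun _ : Fin m => torusHaar N)
        with hφdef
      have hφint : Integrable φ (torusHaar N) := hG.integral_prod_left
      -- re-indexing identity
      have hident : ∀ (z : β) (zs' : Fin m → β),
          ∑ i' : Fin m → Fin N, (∏ k : Fin m, (zs' k (i' k) : ℂ)) •
              (∑ j : Fin N, (z j : ℂ) • b (Fin.cons j i'))
            = ∑ i : Fin (m+1) → Fin N,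
                (∏ k : Fin (m+1), ((Fin.cons z zs' : Fin (m+1) → β) k (i k) : ℂ)) • b i := by
        intro z zs'
        calc ∑ i' : Fin m → Fin N, (∏ k : Fin m, (zs' k (i' k) : ℂ)) •
                (∑ j : Fin N, (z j : ℂ) • b (Fin.cons j i'))
            = ∑ i' : Fin m → Fin N, ∑ j : Fin N,
                ((∏ k : Fin m, (zs' k (i' k) : ℂ)) * (z j : ℂ)) • b (Fin.cons j i') := by
              refine Finset.sum_congr rfl fun i' _ => ?_
              rw [Finset.smul_sum]
              exact Finset.sum_congr rfl fun j _ => (smul_smul _ _ _)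
          _ = ∑ p : Fin N × (Fin m → Fin N),
                ((∏ k : Fin m, (zs' k (p.2 k) : ℂ)) * (z p.1 : ℂ)) • b (Fin.cons p.1 p.2) := by
              rw [Fintype.sum_prod_type, Finset.sum_comm]
          _ = ∑ i : Fin (m+1) → Fin N,
                (∏ k : Fin (m+1), ((Fin.cons z zs' : Fin (m+1) → β) k (i k) : ℂ)) • b i := by
              refine Fintype.sum_equiv (Fin.consEquiv fun _ => Fin N) _ _ fun p => ?_
              have he : (Fin.consEquiv fun _ : Fin (m+1) => Fin N) p
                  = (Fin.cons p.1 p.2 : Fin (m+1) → Fin N) := rfl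
              rw [he, Fin.prod_univ_succ]
              simp only [Fin.cons_zero, Fin.cons_succ]
              rw [mul_comm]
      -- pointwise estimate from the induction hypothesis
      have hstep : ∀ z : β, (∑ i' : Fin m → Fin N, f z i' ^ q) ^ (1/q) ≤ D ^ m * φ z := by
        intro z
        have h := ih (fun i' => ∑ j : Fin N, (z j : ℂ) • b (Fin.cons j i'))
        have heq : D ^ m * (∫ zs' : Fin m → β,
            ‖∑ i' : Fin m → Fin N, (∏ k : Fin m, (zs' k (i' k) : ℂ)) •
              (∑ j : Fin N, (z j : ℂ) • b (Fin.cons j i'))‖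
              ∂(Measure.pi fun _ : Fin m => torusHaar N)) = D ^ m * φ z := by
          congr 1
          refine integral_congr_ae (Filter.Eventually.of_forall fun zs' => ?_)
          exact congrArg norm (hident z zs')
        exact le_trans h (le_of_eq heq)
      have hInn : ∀ i' : Fin m → Fin N, 0 ≤ ∫ z, f z i' ∂torusHaar N :=
        fun i' => integral_nonneg fun z => hfnn z i'
      have h2 : ∀ i' : Fin m → Fin N,
          ∑ j : Fin N, ‖b (Fin.cons j i')‖ ^ q ≤ (D * ∫ z, f z i' ∂torusHaar N) ^ q := by
        intro i'
        have hk := hkey N (fun j => b (Fin.cons j i'))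
        have hnn : (0:ℝ) ≤ ∑ j : Fin N, ‖b (Fin.cons j i')‖ ^ q :=
          Finset.sum_nonneg fun j _ => Real.rpow_nonneg (norm_nonneg _) _
        have h3 := Real.rpow_le_rpow (Real.rpow_nonneg hnn _) hk hq0.le
        rw [← Real.rpow_mul hnn, one_div_mul_cancel hq0', Real.rpow_one] at h3
        exact h3
      have hsum : ∑ i : Fin (m+1) → Fin N, ‖b i‖ ^ q
          = ∑ i' : Fin m → Fin N, ∑ j : Fin N, ‖b (Fin.cons j i')‖ ^ q := by
        rw [← Fintype.sum_equiv (Fin.consEquiv fun _ : Fin (m+1) => Fin N)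
          (fun p : Fin N × (Fin m → Fin N) => ‖b (Fin.cons p.1 p.2)‖ ^ q)
          (fun i => ‖b i‖ ^ q) (fun p => rfl), Fintype.sum_prod_type, Finset.sum_comm]
      have hScont : Continuous fun z : β => (∑ i' : Fin m → Fin N, f z i' ^ q) ^ (1/q) := by
        refine Continuous.rpow_const ?_ fun x => Or.inr (by positivity)
        exact continuous_finset_sum _ fun i' _ =>
          ((continuous_apply i').comp hfcont).rpow_const fun x => Or.inr hq0.le
      calc (∑ i : Fin (m+1) → Fin N, ‖b i‖ ^ q) ^ (1/q)
          = (∑ i' : Fin m → Fin N, ∑ j : Fin N, ‖b (Fin.cons j i')‖ ^ q) ^ (1/q) := by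
            rw [hsum]
        _ ≤ (∑ i' : Fin m → Fin N, (D * ∫ z, f z i' ∂torusHaar N) ^ q) ^ (1/q) := by
            refine Real.rpow_le_rpow ?_ (Finset.sum_le_sum fun i' _ => h2 i') (by positivity)
            exact Finset.sum_nonneg fun i' _ => Finset.sum_nonneg fun j _ =>
              Real.rpow_nonneg (norm_nonneg _) _
        _ = D * (∑ i' : Fin m → Fin N, (∫ z, f z i' ∂torusHaar N) ^ q) ^ (1/q) := by
            have h5 : ∀ i' ∈ Finset.univ (α := Fin m → Fin N),
                (D * ∫ z, f z i' ∂torusHaar N) ^ q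
                  = D ^ q * (∫ z, f z i' ∂torusHaar N) ^ q :=
              fun i' _ => Real.mul_rpow hD0.le (hInn i')
            rw [Finset.sum_congr rfl h5, ← Finset.mul_sum,
              Real.mul_rpow (Real.rpow_nonneg hD0.le _)
                (Finset.sum_nonneg fun i' _ => Real.rpow_nonneg (hInn i') _),
              ← Real.rpow_mul hD0.le, mul_one_div_cancel hq0', Real.rpow_one]
        _ ≤ D * ∫ z, (∑ i' : Fin m → Fin N, f z i' ^ q) ^ (1/q) ∂torusHaar N :=
            mul_le_mul_of_nonneg_left (minkowski_sum q h1q f hfint hfnn) hD0.le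
        _ ≤ D * ∫ z, D ^ m * φ z ∂torusHaar N := by
            refine mul_le_mul_of_nonneg_left ?_ hD0.le
            exact integral_mono hScont.integrable_cpt (hφint.const_mul _) hstep
        _ = D ^ (m+1) * ∫ z, φ z ∂torusHaar N := by
            rw [integral_const_mul]; ring
        _ = D ^ (m+1) *
            ∫ zs : Fin (m+1) → β, G0 zs ∂(Measure.pi fun _ : Fin (m+1) => torusHaar N) := by
            congr 1
            have mp := measurePreserving_piFinSuccAbove (fun _ : Fin (m+1) => torusHaar N) 0
            have hmp := mp.integral_comp'
              (g := fun p : β × (Fin m → β) => G0 (Fin.cons p.1 p.2))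
            have hcons : ∀ zs : Fin (m+1) → β,
                (Fin.cons (zs 0) (fun j => zs ((0 : Fin (m+1)).succAbove j))
                  : Fin (m+1) → β) = zs := by
              intro zs; funext k
              induction k using Fin.cases with
              | zero => simp
              | succ j => simp [Fin.succAbove_zero]
            have heq2 : ∀ zs : Fin (m+1) → β,
                (fun p : β × (Fin m → β) => G0 (Fin.cons p.1 p.2))
                  ((MeasurableEquiv.piFinSuccAbove (fun _ : Fin (m+1) => β) 0) zs)
                  = G0 zs := by
              intro zs
              have hz : (MeasurableEquiv.piFinSuccAbove (fun _ : Fin (m+1) => β) 0) zs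
                  = (zs 0, fun j => zs ((0 : Fin (m+1)).succAbove j)) := rfl
              rw [hz]
              exact congrArg G0 (hcons zs)
            calc ∫ z, φ z ∂torusHaar N
                = ∫ p : β × (Fin m → β), G0 (Fin.cons p.1 p.2)
                    ∂((torusHaar N).prod (Measure.pi fun _ : Fin m => torusHaar N)) :=
                  (integral_prod _ hG).symm
              _ = ∫ zs : Fin (m+1) → β, G0 zs
                    ∂(Measure.pi fun _ : Fin (m+1) => torusHaar N) :=
                  hmp.symm.trans (integral_congr_ae (Filter.Eventually.of_forall heq2))

  exact main m a
end
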